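/- arXiv:2202.00072 — 2 statements merged into one kernel-verified Lean document; each statement's English description precedes it below -/
import Mathlib

section
/- Let θ > 1 be a real number and let a : [0,∞) → ℝ be continuous with a(s) > 0 for s > 0, and suppose that the map s ↦ a(s)/s^{θ−1} is non-increasing on (0,∞). Define A(s) = ∫₀^s a(t) dt. Then the function s ↦ θ·A(s) − a(s)·s is non-decreasing on (0,∞); that is, for all 0 < s₁ ≤ s₂ one has θ·A(s₁) − a(s₁)·s₁ ≤ θ·A(s₂) − a(s₂)·s₂. -/
/-- Under the hypotheses of condition (a₂), the map
`s ↦ θ·A(s) − a(s)·s` is non-decreasing on `(0,∞)`. -/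
theorem kirchhoff_thetaA_sub_as_monotone (θ : ℝ) (hθ : 1 < θ) (a : ℝ → ℝ)
    (ha_cont : ContinuousOn a (Set.Ici (0 : ℝ)))
    (ha_pos : ∀ s : ℝ, 0 < s → 0 < a s)
    (ha_anti : AntitoneOn (fun s : ℝ => a s / s ^ (θ - 1)) (Set.Ioi (0 : ℝ))) :
    ∀ s₁ s₂ : ℝ, 0 < s₁ → s₁ ≤ s₂ →
      θ * (∫ t in (0:ℝ)..s₁, a t) - a s₁ * s₁ ≤
        θ * (∫ t in (0:ℝ)..s₂, a t) - a s₂ * s₂ := by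
  intro s₁ s₂ hs₁ h12
  have hs₂ : 0 < s₂ := lt_of_lt_of_le hs₁ h12
  set r : ℝ := θ - 1 with hr
  have hrpos : 0 < r := by simp [hr]; linarith
  have hs₂r : (0:ℝ) < s₂ ^ r := Real.rpow_pos_of_pos hs₂ r
  have hs₁r : (0:ℝ) < s₁ ^ r := Real.rpow_pos_of_pos hs₁ r
  -- integrability
  have hint1 : IntervalIntegrable a MeasureTheory.volume 0 s₁ :=
    (ha_cont.mono (by
      intro x hx
      rcases Set.mem_uIcc.mp hx with h | h
      · exact h.1
      · linarith [h.1, h.2])).intervalIntegrable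
  have hint2 : IntervalIntegrable a MeasureTheory.volume s₁ s₂ :=
    (ha_cont.mono (by
      intro x hx
      rcases Set.mem_uIcc.mp hx with h | h
      · exact Set.mem_Ici.mpr (by linarith [h.1])
      · exact Set.mem_Ici.mpr (by linarith [h.1]))).intervalIntegrable
  have hadd : (∫ t in (0:ℝ)..s₁, a t) + (∫ t in s₁..s₂, a t) = ∫ t in (0:ℝ)..s₂, a t :=
    intervalIntegral.integral_add_adjacent_intervals hint1 hint2
  -- pointwise bound on [s₁, s₂]
  have hbound : ∀ t ∈ Set.Icc s₁ s₂, a s₂ / s₂ ^ r * t ^ r ≤ a t := by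
    intro t ht
    have htpos : 0 < t := lt_of_lt_of_le hs₁ ht.1
    have htr : (0:ℝ) < t ^ r := Real.rpow_pos_of_pos htpos r
    have hg : a s₂ / s₂ ^ r ≤ a t / t ^ r :=
      ha_anti (Set.mem_Ioi.mpr htpos) (Set.mem_Ioi.mpr hs₂) ht.2
    calc a s₂ / s₂ ^ r * t ^ r ≤ a t / t ^ r * t ^ r := by
          exact mul_le_mul_of_nonneg_right hg htr.le
      _ = a t := div_mul_cancel₀ _ htr.ne'
  -- compare integrals
  have hintg : IntervalIntegrable (fun t => a s₂ / s₂ ^ r * t ^ r)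
      MeasureTheory.volume s₁ s₂ := by
    apply ContinuousOn.intervalIntegrable
    apply ContinuousOn.mul continuousOn_const
    intro x hx
    have hxpos : 0 < x := by
      rcases Set.mem_uIcc.mp hx with h | h
      · linarith [h.1]
      · linarith [h.1]
    exact (Real.continuousAt_rpow_const x r (Or.inl hxpos.ne')).continuousWithinAt
  have hmono : (∫ t in s₁..s₂, a s₂ / s₂ ^ r * t ^ r) ≤ ∫ t in s₁..s₂, a t :=
    intervalIntegral.integral_mono_on h12 hintg hint2 hbound
  -- compute the power integral
  have hrpow : (∫ t in s₁..s₂, t ^ r) = (s₂ ^ θ - s₁ ^ θ) / θ := by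
    rw [integral_rpow (Or.inl (by linarith : (-1:ℝ) < r))]
    have : r + 1 = θ := by simp [hr]
    rw [this]
  have hcalc : (∫ t in s₁..s₂, a s₂ / s₂ ^ r * t ^ r)
      = a s₂ / s₂ ^ r * ((s₂ ^ θ - s₁ ^ θ) / θ) := by
    rw [intervalIntegral.integral_const_mul, hrpow]
  -- key algebraic facts
  have hθpos : (0:ℝ) < θ := by linarith
  have hs₂θ : s₂ ^ θ = s₂ ^ r * s₂ := by
    rw [hr]
    rw [← Real.rpow_add_one hs₂.ne' (θ - 1)]
    ring_nf
  have hs₁θ : s₁ ^ θ = s₁ ^ r * s₁ := by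
    rw [hr]
    rw [← Real.rpow_add_one hs₁.ne' (θ - 1)]
    ring_nf
  have hg12 : a s₂ / s₂ ^ r ≤ a s₁ / s₁ ^ r :=
    ha_anti (Set.mem_Ioi.mpr hs₁) (Set.mem_Ioi.mpr hs₂) h12
  -- combine
  have key : a s₂ * s₂ - a s₁ * s₁ ≤ θ * ∫ t in s₁..s₂, a t := by
    have h1 : a s₂ / s₂ ^ r * (s₂ ^ θ - s₁ ^ θ) ≤ θ * ∫ t in s₁..s₂, a t := by
      have := mul_le_mul_of_nonneg_left hmono hθpos.le
      rw [hcalc] at this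
      calc a s₂ / s₂ ^ r * (s₂ ^ θ - s₁ ^ θ)
          = θ * (a s₂ / s₂ ^ r * ((s₂ ^ θ - s₁ ^ θ) / θ)) := by
            field_simp
        _ ≤ θ * ∫ t in s₁..s₂, a t := this
    have h2 : a s₂ * s₂ - a s₁ * s₁ ≤ a s₂ / s₂ ^ r * (s₂ ^ θ - s₁ ^ θ) := by
      have e1 : a s₂ / s₂ ^ r * s₂ ^ θ = a s₂ * s₂ := by
        rw [hs₂θ]; field_simp
      have e2 : a s₁ / s₁ ^ r * s₁ ^ θ = a s₁ * s₁ := by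
        rw [hs₁θ]; field_simp
      have h3 : a s₂ / s₂ ^ r * s₁ ^ θ ≤ a s₁ / s₁ ^ r * s₁ ^ θ :=
        mul_le_mul_of_nonneg_right hg12 (Real.rpow_pos_of_pos hs₁ θ).le
      nlinarith [h3, e1, e2]
    linarith
  have : θ * (∫ t in (0:ℝ)..s₂, a t) - θ * (∫ t in (0:ℝ)..s₁, a t)
      = θ * ∫ t in s₁..s₂, a t := by
    rw [← hadd]; ring
  linarith
end

section
/- Let λ > 0, α > 0, c₁, c₂, c₃ ≥ 0 with c₁ + c₂ + c₃ > 0, let N > 1, β > 1, p* > 1, χ > 0 be real numbers, and let φ : [0,∞) → ℝ be continuous such that, writing Φ(t) = ∫₀^t φ(s) ds, one has 0 < χ·Φ(t) ≤ φ(t)·t for all t > 0. Define f(t) = λ·c₁·t^{β−1}·e^{α t^{N/(N−1)}} + c₂·φ(t) + c₃·t^{p*−1} for t ≥ 0 and F(t) = ∫₀^t f(s) ds. Then, with ψ = min{χ, β, p*}, one has 0 < ψ·F(t) ≤ f(t)·t for every t > 0. -/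
/-- Pointwise Ambrosetti–Rabinowitz condition
`0 < ψ·F(t) ≤ f(t)·t`, `ψ = min{χ, β, p*}`, for the nonlinearity
`f(t) = λc₁ t^(β−1) e^(α t^(N/(N−1))) + c₂ φ(t) + c₃ t^(p*−1)`. -/
theorem AR_condition_for_f (lam α c₁ c₂ c₃ N β pstar χ : ℝ) (φ : ℝ → ℝ)
    (hlam : 0 < lam) (hα : 0 < α)
    (hc₁ : 0 ≤ c₁) (hc₂ : 0 ≤ c₂) (hc₃ : 0 ≤ c₃) (hcsum : 0 < c₁ + c₂ + c₃)
    (hN : 1 < N) (hβ : 1 < β) (hpstar : 1 < pstar) (hχ : 0 < χ)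
    (hφ_cont : ContinuousOn φ (Set.Ici (0 : ℝ)))
    (hφ_AR : ∀ t : ℝ, 0 < t →
      0 < χ * (∫ s in (0:ℝ)..t, φ s) ∧ χ * (∫ s in (0:ℝ)..t, φ s) ≤ φ t * t) :
    ∀ t : ℝ, 0 < t →
      let f : ℝ → ℝ := fun u =>
        lam * c₁ * u ^ (β - 1) * Real.exp (α * u ^ (N / (N - 1))) +
          c₂ * φ u + c₃ * u ^ (pstar - 1)
      let F : ℝ := ∫ s in (0:ℝ)..t, f s
      let ψ : ℝ := min χ (min β pstar)
      0 < ψ * F ∧ ψ * F ≤ f t * t := by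
  intro t ht
  dsimp only
  set γ : ℝ := N / (N - 1) with hγdef
  have hγ : 0 < γ := div_pos (by linarith) (by linarith)
  have hβ0 : (0:ℝ) < β - 1 := by linarith
  have hp0 : (0:ℝ) < pstar - 1 := by linarith
  -- continuity of the power functions
  have hcont_pow : ∀ r : ℝ, 0 < r → Continuous fun s : ℝ => s ^ r := by
    intro r hr
    exact continuous_iff_continuousAt.2 fun x =>
      Real.continuousAt_rpow_const x r (Or.inr hr.le)
  have hcg1 : Continuous fun s : ℝ => s ^ (β - 1) * Real.exp (α * s ^ γ) :=
    (hcont_pow _ hβ0).mul (Real.continuous_exp.comp (continuous_const.mul (hcont_pow _ hγ)))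
  have hcg3 : Continuous fun s : ℝ => s ^ (pstar - 1) := hcont_pow _ hp0
  -- integrability on [0, t]
  have hint1 : IntervalIntegrable (fun s : ℝ => s ^ (β - 1) * Real.exp (α * s ^ γ))
      MeasureTheory.volume 0 t := hcg1.intervalIntegrable 0 t
  have hint3 : IntervalIntegrable (fun s : ℝ => s ^ (pstar - 1))
      MeasureTheory.volume 0 t := hcg3.intervalIntegrable 0 t
  have hsub : Set.uIcc (0:ℝ) t ⊆ Set.Ici (0:ℝ) := by
    rw [Set.uIcc_of_le ht.le]
    exact fun x hx => hx.1
  have hintφ : IntervalIntegrable φ MeasureTheory.volume 0 t :=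
    (hφ_cont.mono hsub).intervalIntegrable
  set I₁ : ℝ := ∫ s in (0:ℝ)..t, s ^ (β - 1) * Real.exp (α * s ^ γ) with hI₁
  set Φ : ℝ := ∫ s in (0:ℝ)..t, φ s with hΦ
  set I₃ : ℝ := ∫ s in (0:ℝ)..t, s ^ (pstar - 1) with hI₃
  -- positivity of I₁
  have hI₁pos : 0 < I₁ := by
    apply intervalIntegral.intervalIntegral_pos_of_pos_on hint1 _ ht
    intro x hx
    exact mul_pos (Real.rpow_pos_of_pos hx.1 _) (Real.exp_pos _)
  have hΦpos : 0 < Φ := by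
    have h := (hφ_AR t ht).1
    nlinarith
  -- value of I₃
  have hI₃val : I₃ = t ^ pstar / pstar := by
    rw [hI₃, integral_rpow (Or.inl (by linarith))]
    rw [Real.zero_rpow (by linarith), sub_add_cancel]
    ring_nf
  have hI₃pos : 0 < I₃ := by
    rw [hI₃val]
    exact div_pos (Real.rpow_pos_of_pos ht _) (by linarith)
  -- key bound for term 1 : β * I₁ ≤ t^(β-1) * exp (α t^γ) * t
  have hbound1 : β * I₁ ≤ t ^ (β - 1) * Real.exp (α * t ^ γ) * t := by
    have hmono : I₁ ≤ ∫ s in (0:ℝ)..t, s ^ (β - 1) * Real.exp (α * t ^ γ) := by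
      have hc' : Continuous fun s : ℝ => s ^ (β - 1) * Real.exp (α * t ^ γ) :=
        (hcont_pow _ hβ0).mul continuous_const
      apply intervalIntegral.integral_mono_on ht.le hint1 (hc'.intervalIntegrable 0 t)
      intro x hx
      have hxle : x ^ γ ≤ t ^ γ := Real.rpow_le_rpow hx.1 hx.2 hγ.le
      have : Real.exp (α * x ^ γ) ≤ Real.exp (α * t ^ γ) :=
        Real.exp_le_exp.2 (by nlinarith)
      exact mul_le_mul_of_nonneg_left this (Real.rpow_nonneg hx.1 _)
    have hval : (∫ s in (0:ℝ)..t, s ^ (β - 1) * Real.exp (α * t ^ γ))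
        = Real.exp (α * t ^ γ) * (t ^ β / β) := by
      rw [intervalIntegral.integral_mul_const, integral_rpow (Or.inl (by linarith)),
        Real.zero_rpow (by linarith), sub_add_cancel]
      ring
    have htβ : t ^ β = t ^ (β - 1) * t := by
      have := Real.rpow_add_one (ne_of_gt ht) (β - 1)
      simpa [sub_add_cancel] using this
    calc β * I₁ ≤ β * (Real.exp (α * t ^ γ) * (t ^ β / β)) := by
          rw [← hval]; exact mul_le_mul_of_nonneg_left hmono (by linarith)
      _ = t ^ β * Real.exp (α * t ^ γ) := by field_simp
      _ = t ^ (β - 1) * Real.exp (α * t ^ γ) * t := by rw [htβ]; ring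
  have hbound3 : pstar * I₃ = t ^ (pstar - 1) * t := by
    have := Real.rpow_add_one (ne_of_gt ht) (pstar - 1)
    rw [hI₃val]
    field_simp
    rw [← this, sub_add_cancel]
  have hbound2 : χ * Φ ≤ φ t * t := (hφ_AR t ht).2
  have hintA : IntervalIntegrable (fun s : ℝ => lam * c₁ * s ^ (β - 1) * Real.exp (α * s ^ γ))
      MeasureTheory.volume 0 t :=
    (((continuous_const.mul (hcont_pow _ hβ0)).mul
      (Real.continuous_exp.comp (continuous_const.mul (hcont_pow _ hγ)))).intervalIntegrable 0 t)
  -- decompose F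
  have hF : (∫ s in (0:ℝ)..t,
      (lam * c₁ * s ^ (β - 1) * Real.exp (α * s ^ γ) + c₂ * φ s + c₃ * s ^ (pstar - 1)))
      = lam * c₁ * I₁ + c₂ * Φ + c₃ * I₃ := by
    rw [intervalIntegral.integral_add (hintA.add (hintφ.const_mul c₂)) (hint3.const_mul c₃),
      intervalIntegral.integral_add hintA (hintφ.const_mul c₂),
      intervalIntegral.integral_const_mul, intervalIntegral.integral_const_mul]
    have : (∫ s in (0:ℝ)..t, lam * c₁ * s ^ (β - 1) * Real.exp (α * s ^ γ))
        = lam * c₁ * I₁ := by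
      rw [hI₁, ← intervalIntegral.integral_const_mul]
      congr 1; ext s; ring
    rw [this]
  rw [hF]
  -- ψ facts
  have hψχ : min χ (min β pstar) ≤ χ := min_le_left _ _
  have hψβ : min χ (min β pstar) ≤ β := le_trans (min_le_right _ _) (min_le_left _ _)
  have hψp : min χ (min β pstar) ≤ pstar := le_trans (min_le_right _ _) (min_le_right _ _)
  have hψpos : 0 < min χ (min β pstar) := lt_min hχ (lt_min (by linarith) (by linarith))
  set ψ := min χ (min β pstar)
  have hc : 0 < c₁ ∨ 0 < c₂ ∨ 0 < c₃ := by
    by_contra h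
    push_neg at h
    obtain ⟨h1, h2, h3⟩ := h
    have : c₁ = 0 := le_antisymm h1 hc₁
    have : c₂ = 0 := le_antisymm h2 hc₂
    have : c₃ = 0 := le_antisymm h3 hc₃
    linarith [le_antisymm h1 hc₁, le_antisymm h2 hc₂, le_antisymm h3 hc₃]
  have hFpos : 0 < lam * c₁ * I₁ + c₂ * Φ + c₃ * I₃ := by
    have h1 : 0 ≤ lam * c₁ * I₁ := by positivity
    have h2 : 0 ≤ c₂ * Φ := mul_nonneg hc₂ hΦpos.le
    have h3 : 0 ≤ c₃ * I₃ := mul_nonneg hc₃ hI₃pos.le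
    rcases hc with h | h | h
    · linarith [mul_pos (mul_pos hlam h) hI₁pos]
    · linarith [mul_pos h hΦpos]
    · linarith [mul_pos h hI₃pos]
  constructor
  · exact mul_pos hψpos hFpos
  · have hlc : 0 ≤ lam * c₁ := mul_nonneg hlam.le hc₁
    have e1 : ψ * (lam * c₁ * I₁) ≤ lam * c₁ * (t ^ (β - 1) * Real.exp (α * t ^ γ) * t) := by
      calc ψ * (lam * c₁ * I₁) = lam * c₁ * (ψ * I₁) := by ring
        _ ≤ lam * c₁ * (β * I₁) :=
            mul_le_mul_of_nonneg_left (mul_le_mul_of_nonneg_right hψβ hI₁pos.le) hlc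
        _ ≤ lam * c₁ * (t ^ (β - 1) * Real.exp (α * t ^ γ) * t) :=
            mul_le_mul_of_nonneg_left hbound1 hlc
    have e2 : ψ * (c₂ * Φ) ≤ c₂ * (φ t * t) := by
      calc ψ * (c₂ * Φ) = c₂ * (ψ * Φ) := by ring
        _ ≤ c₂ * (χ * Φ) :=
            mul_le_mul_of_nonneg_left (mul_le_mul_of_nonneg_right hψχ hΦpos.le) hc₂
        _ ≤ c₂ * (φ t * t) := mul_le_mul_of_nonneg_left hbound2 hc₂
    have e3 : ψ * (c₃ * I₃) ≤ c₃ * (t ^ (pstar - 1) * t) := by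
      calc ψ * (c₃ * I₃) = c₃ * (ψ * I₃) := by ring
        _ ≤ c₃ * (pstar * I₃) :=
            mul_le_mul_of_nonneg_left (mul_le_mul_of_nonneg_right hψp hI₃pos.le) hc₃
        _ = c₃ * (t ^ (pstar - 1) * t) := by rw [hbound3]
    calc ψ * (lam * c₁ * I₁ + c₂ * Φ + c₃ * I₃)
        = ψ * (lam * c₁ * I₁) + ψ * (c₂ * Φ) + ψ * (c₃ * I₃) := by ring
      _ ≤ lam * c₁ * (t ^ (β - 1) * Real.exp (α * t ^ γ) * t) + c₂ * (φ t * t)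
            + c₃ * (t ^ (pstar - 1) * t) := by linarith
      _ = (lam * c₁ * t ^ (β - 1) * Real.exp (α * t ^ γ) + c₂ * φ t
            + c₃ * t ^ (pstar - 1)) * t := by ring
end
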